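/- Let p ≥ 5 be a prime, τ ≥ 1, k = p^τ(p-1), and let f = ∑_{i=1}^s a_i x_i^k, g = ∑_{i=1}^s b_i x_i^k be additive forms with integer coefficients. If the congruences ∑ a_i x_i^k ≡ 0 (mod p^{τ+1}) and ∑ b_i x_i^k ≡ 0 (mod p^{τ+1}) have a common integer solution (x_1, ..., x_s) such that the 2×s matrix whose columns are (a_i x_i, b_i x_i)ᵀ has rank 2 modulo p, then the equations f = 0 and g = 0 have a common nonzero solution in the p-adic numbers ℚ_p. -/

import Mathlib

open Finset Polynomial

section Helpers

variable {p : ℕ} [hp : Fact p.Prime]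

private lemma pdvd_iff_norm_le (n : ℕ) (x : ℤ_[p]) :
    (p : ℤ_[p]) ^ n ∣ x ↔ ‖x‖ ≤ (p : ℝ) ^ (-(n : ℤ)) := by
  rw [PadicInt.norm_le_pow_iff_mem_span_pow, Ideal.mem_span_singleton]

private lemma norm_one_of_pdvd_sub_one {z : ℤ_[p]} (h : (p : ℤ_[p]) ∣ z - 1) : ‖z‖ = 1 := by
  have h1 : ‖z - 1‖ < 1 := (PadicInt.norm_lt_one_iff_dvd _).2 h
  rcases le_or_gt 1 ‖z‖ with h2 | h2
  · exact le_antisymm (PadicInt.norm_le_one z) h2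
  · exfalso
    have e1 : (1 : ℤ_[p]) = z + -(z - 1) := by ring
    have hle : ‖(1 : ℤ_[p])‖ ≤ max ‖z‖ ‖-(z - 1)‖ := by
      conv_lhs => rw [e1]
      exact PadicInt.nonarchimedean _ _
    rw [norm_neg, norm_one] at hle
    exact lt_irrefl (1 : ℝ) (lt_of_le_of_lt hle (max_lt h2 h1))

private lemma binom_aux (hp2 : p ≠ 2) (x : ℤ_[p]) (hx : (p : ℤ_[p]) ∣ x) :
    (p : ℤ_[p]) * x ^ 2 ∣ (1 + x) ^ p - 1 - p * x := by
  have h2 : 2 ≤ p := hp.out.two_le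
  obtain ⟨q, hq⟩ : ∃ q, p = q + 2 := ⟨p - 2, by omega⟩
  have hq1 : 1 ≤ q := by
    rcases Nat.eq_zero_or_pos q with h0 | h0
    · exfalso; exact hp2 (by omega)
    · exact h0
  subst hq
  have hexp : (1 + x) ^ (q + 2) =
      ∑ m ∈ range (q + 2 + 1), x ^ m * 1 ^ (q + 2 - m) * ((q + 2).choose m : ℤ_[q+2]) := by
    rw [add_comm 1 x]; exact_mod_cast add_pow x 1 (q + 2)
  have key : (1 + x) ^ (q + 2) - 1 - ((q + 2 : ℕ) : ℤ_[q+2]) * x =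
      ∑ m ∈ range (q + 1), x ^ (m + 2) * ((q + 2).choose (m + 2) : ℤ_[q+2]) := by
    rw [hexp, Finset.sum_range_succ', Finset.sum_range_succ']
    simp only [one_pow, mul_one, pow_zero, Nat.choose_zero_right, Nat.cast_one, one_mul,
      pow_one, Nat.choose_one_right]
    simp only [show ∀ m : ℕ, m + 1 + 1 = m + 2 from fun m => rfl, Nat.choose_one_right]
    push_cast [Nat.choose_one_right]
    ring
  rw [key]
  apply Finset.dvd_sum
  intro m hm
  have hm' : m ≤ q := Nat.lt_succ_iff.mp (Finset.mem_range.mp hm)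
  have hterm : x ^ (m + 2) * ((q + 2).choose (m + 2) : ℤ_[q+2])
      = x ^ 2 * (x ^ m * ((q + 2).choose (m + 2) : ℤ_[q+2])) := by ring
  rw [hterm, mul_comm (((q + 2 : ℕ)) : ℤ_[q+2]) (x ^ 2)]
  refine mul_dvd_mul_left _ ?_
  rcases lt_or_eq_of_le hm' with hlt | heq
  · have hd : (q + 2) ∣ (q + 2).choose (m + 2) :=
      Nat.Prime.dvd_choose_self hp.out (by omega) (by omega)
    exact Dvd.dvd.mul_left (Nat.cast_dvd_cast hd) _
  · subst heq
    exact Dvd.dvd.mul_right (dvd_pow hx (by omega)) _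

private lemma pth_root_step (hp5 : 5 ≤ p) (n : ℕ) (hn : 1 ≤ n) (c : ℤ_[p]) :
    ∃ w : ℤ_[p], w ^ p = 1 + (p : ℤ_[p]) ^ (n + 1) * c ∧ (p : ℤ_[p]) ^ n ∣ w - 1 := by
  have hp2 : p ≠ 2 := by omega
  have hppos : (1 : ℝ) < (p : ℝ) := by exact_mod_cast hp.out.one_lt
  set u : ℤ_[p] := 1 + (p : ℤ_[p]) ^ (n + 1) * c with hu
  set aa : ℤ_[p] := 1 + (p : ℤ_[p]) ^ n * c with haa
  set F : Polynomial ℤ_[p] := X ^ p - C u with hF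
  have hevalaa : F.eval aa = aa ^ p - u := by simp [hF]
  have hpx : (p : ℤ_[p]) ∣ (p : ℤ_[p]) ^ n * c :=
    Dvd.dvd.mul_right (dvd_pow_self _ (by omega)) c
  have hbin := binom_aux hp2 ((p : ℤ_[p]) ^ n * c) hpx
  have hdvd_eval : (p : ℤ_[p]) ^ (n + 2) ∣ F.eval aa := by
    rw [hevalaa]
    have e1 : aa ^ p - u
        = (1 + (p : ℤ_[p]) ^ n * c) ^ p - 1 - (p : ℤ_[p]) * ((p : ℤ_[p]) ^ n * c) := by
      rw [haa, hu]; ring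
    rw [e1]
    refine dvd_trans ?_ hbin
    have e2 : (p : ℤ_[p]) * ((p : ℤ_[p]) ^ n * c) ^ 2
        = (p : ℤ_[p]) ^ (2 * n + 1) * c ^ 2 := by ring
    rw [e2]
    exact Dvd.dvd.mul_right (pow_dvd_pow _ (by omega)) _
  have hnormaa : ‖aa‖ = 1 := by
    apply norm_one_of_pdvd_sub_one
    have e : aa - 1 = (p : ℤ_[p]) ^ n * c := by rw [haa]; ring
    rw [e]; exact hpx
  have hderiv : F.derivative = C ((p : ℕ) : ℤ_[p]) * X ^ (p - 1) := by
    rw [hF]; simp [derivative_X_pow]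
  have hderiv_eval : F.derivative.eval aa = (p : ℤ_[p]) * aa ^ (p - 1) := by
    rw [hderiv]; simp
  have hnorm_deriv : ‖F.derivative.eval aa‖ = (p : ℝ)⁻¹ := by
    rw [hderiv_eval, norm_mul, norm_pow, hnormaa, one_pow, mul_one, PadicInt.norm_p]
  have hnorm_cond : ‖F.eval aa‖ < ‖F.derivative.eval aa‖ ^ 2 := by
    have h1 : ‖F.eval aa‖ ≤ (p : ℝ) ^ (-((n : ℕ) + 2 : ℕ) : ℤ) := (pdvd_iff_norm_le _ _).1 hdvd_eval
    rw [hnorm_deriv]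
    have h2 : ((p : ℝ)⁻¹) ^ 2 = (p : ℝ) ^ (-2 : ℤ) := by
      rw [zpow_neg, ← zpow_natCast]; norm_num
    rw [h2]
    refine lt_of_le_of_lt h1 ?_
    apply zpow_lt_zpow_right₀ hppos
    omega
  obtain ⟨z, hz, hzdist, -, -⟩ := hensels_lemma hnorm_cond
  have hzp : z ^ p = u := by
    have h0 : z ^ p - u = 0 := by simpa [hF] using hz
    exact sub_eq_zero.mp h0
  have hz1 : (p : ℤ_[p]) ∣ z - 1 := by
    rw [← PadicInt.norm_lt_one_iff_dvd]
    have e : z - 1 = (z - aa) + (aa - 1) := by ring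
    rw [e]
    refine lt_of_le_of_lt (PadicInt.nonarchimedean _ _) (max_lt ?_ ?_)
    · rw [Polynomial.coe_aeval_eq_eval, hnorm_deriv] at hzdist
      refine lt_of_lt_of_le hzdist ?_
      rw [inv_le_one₀ (by positivity)]
      exact hppos.le
    · have e2 : aa - 1 = (p : ℤ_[p]) ^ n * c := by rw [haa]; ring
      rw [e2]
      exact (PadicInt.norm_lt_one_iff_dvd _).2 hpx
  have boost : ∀ m, m ≤ n → (p : ℤ_[p]) ^ m ∣ z - 1 := by
    intro m
    induction m with
    | zero => intro _; simpa using dvd_refl _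
    | succ m ih =>
      intro hmn
      have hzm : (p : ℤ_[p]) ^ m ∣ z - 1 := ih (by omega)
      rcases Nat.eq_zero_or_pos m with rfl | hm1
      · simpa using hz1
      · obtain ⟨e, he⟩ := hzm
        have hze : z = 1 + (p : ℤ_[p]) ^ m * e := by rw [← he]; ring
        have hbin2 := binom_aux hp2 ((p : ℤ_[p]) ^ m * e)
          (Dvd.dvd.mul_right (dvd_pow_self _ (by omega)) e)
        have hd1 : (p : ℤ_[p]) ^ (m + 2) ∣ z ^ p - 1 - (p : ℤ_[p]) ^ (m + 1) * e := by
          have e1 : z ^ p - 1 - (p : ℤ_[p]) ^ (m + 1) * e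
              = (1 + (p : ℤ_[p]) ^ m * e) ^ p - 1 - (p : ℤ_[p]) * ((p : ℤ_[p]) ^ m * e) := by
            rw [hze]; ring
          rw [e1]
          refine dvd_trans ?_ hbin2
          have e2 : (p : ℤ_[p]) * ((p : ℤ_[p]) ^ m * e) ^ 2
              = (p : ℤ_[p]) ^ (2 * m + 1) * e ^ 2 := by ring
          rw [e2]
          exact Dvd.dvd.mul_right (pow_dvd_pow _ (by omega)) _
        have hd2 : (p : ℤ_[p]) ^ (m + 2) ∣ z ^ p - 1 := by
          rw [hzp]
          have e3 : u - 1 = (p : ℤ_[p]) ^ (n + 1) * c := by rw [hu]; ring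
          rw [e3]
          exact Dvd.dvd.mul_right (pow_dvd_pow _ (by omega)) _
        have hd3 : (p : ℤ_[p]) ^ (m + 2) ∣ (p : ℤ_[p]) ^ (m + 1) * e := by
          have e4 : (p : ℤ_[p]) ^ (m + 1) * e
              = (z ^ p - 1) - (z ^ p - 1 - (p : ℤ_[p]) ^ (m + 1) * e) := by ring
          rw [e4]; exact dvd_sub hd2 hd1
        have hpe : (p : ℤ_[p]) ∣ e := by
          have hpne : (p : ℤ_[p]) ≠ 0 := by
            exact_mod_cast (Nat.cast_ne_zero (R := ℤ_[p])).2 hp.out.ne_zero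
          have hne : ((p : ℤ_[p])) ^ (m + 1) ≠ 0 := pow_ne_zero _ hpne
          have e5 : (p : ℤ_[p]) ^ (m + 2) = (p : ℤ_[p]) ^ (m + 1) * p := by ring
          rw [e5] at hd3
          exact (mul_dvd_mul_iff_left hne).1 hd3
        obtain ⟨e', he'⟩ := hpe
        refine ⟨e', ?_⟩
        rw [he, he']; ring
  exact ⟨z, hzp, boost n le_rfl⟩

private lemma ppow_root (hp5 : 5 ≤ p) :
    ∀ τ : ℕ, ∀ u : ℤ_[p], (p : ℤ_[p]) ^ (τ + 1) ∣ u - 1 →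
      ∃ v : ℤ_[p], v ^ (p ^ τ) = u ∧ (p : ℤ_[p]) ∣ v - 1 := by
  intro τ
  induction τ with
  | zero =>
    intro u hu
    exact ⟨u, by simp, by simpa using hu⟩
  | succ τ ih =>
    intro u hu
    obtain ⟨c, hc⟩ := hu
    obtain ⟨w, hw, hwd⟩ := pth_root_step hp5 (τ + 1) (by omega) c
    obtain ⟨v, hv, hvd⟩ := ih w hwd
    refine ⟨v, ?_, hvd⟩
    rw [pow_succ, pow_mul, hv, hw, ← hc]
    ring

private lemma kth_root (hp5 : 5 ≤ p) (τ : ℕ) {u : ℤ_[p]}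
    (hu : (p : ℤ_[p]) ^ (τ + 1) ∣ u - 1) :
    ∃ t : ℤ_[p], t ^ (p ^ τ * (p - 1)) = u ∧ (p : ℤ_[p]) ∣ t - 1 := by
  obtain ⟨v, hv, hvd⟩ := ppow_root hp5 τ u hu
  -- (p-1)-th root of v via Hensel
  have hppos : (1 : ℝ) < (p : ℝ) := by exact_mod_cast hp.out.one_lt
  set F : Polynomial ℤ_[p] := X ^ (p - 1) - C v with hF
  have heval1 : F.eval 1 = 1 - v := by simp [hF]
  have hderiv : F.derivative = C (((p - 1 : ℕ) : ℤ_[p])) * X ^ (p - 1 - 1) := by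
    rw [hF]; simp [derivative_X_pow]
  have hderiv_eval : F.derivative.eval 1 = ((p - 1 : ℕ) : ℤ_[p]) := by
    rw [hderiv]; simp
  have hnorm_deriv : ‖F.derivative.eval 1‖ = 1 := by
    rw [hderiv_eval]
    refine le_antisymm (PadicInt.norm_le_one _) ?_
    by_contra hlt
    push_neg at hlt
    have : ‖(((p - 1 : ℕ) : ℤ) : ℤ_[p])‖ < 1 := by
      rwa [show (((p - 1 : ℕ) : ℤ) : ℤ_[p]) = ((p - 1 : ℕ) : ℤ_[p]) by push_cast; ring]
    rw [PadicInt.norm_int_lt_one_iff_dvd] at this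
    have := Int.le_of_dvd (by exact_mod_cast Nat.sub_pos_of_lt hp.out.one_lt) this
    omega
  have hnorm_cond : ‖F.eval 1‖ < ‖F.derivative.eval 1‖ ^ 2 := by
    rw [heval1, hnorm_deriv, one_pow]
    have e : (1 : ℤ_[p]) - v = -(v - 1) := by ring
    rw [e, norm_neg]
    exact (PadicInt.norm_lt_one_iff_dvd _).2 hvd
  obtain ⟨t, ht, htdist, -, -⟩ := hensels_lemma hnorm_cond
  have htp : t ^ (p - 1) = v := by
    have h0 : t ^ (p - 1) - v = 0 := by simpa [hF] using ht
    exact sub_eq_zero.mp h0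
  have htd : (p : ℤ_[p]) ∣ t - 1 := by
    rw [← PadicInt.norm_lt_one_iff_dvd]
    rw [Polynomial.coe_aeval_eq_eval, hnorm_deriv] at htdist
    exact htdist
  refine ⟨t, ?_, htd⟩
  rw [mul_comm, pow_mul, htp, hv]

end Helpers

theorem stmt_16 (p τ s : ℕ) [hp : Fact p.Prime] (hp5 : 5 ≤ p) (hτ : 1 ≤ τ)
    (a b : Fin s → ℤ)
    (h : ∃ x : Fin s → ℤ,
      (p : ℤ) ^ (τ + 1) ∣ ∑ i, a i * x i ^ (p ^ τ * (p - 1)) ∧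
      (p : ℤ) ^ (τ + 1) ∣ ∑ i, b i * x i ^ (p ^ τ * (p - 1)) ∧
      ∃ i j, ¬ (p : ℤ) ∣ (a i * x i) * (b j * x j) - (a j * x j) * (b i * x i)) :
    ∃ y : Fin s → ℚ_[p], y ≠ 0 ∧
      ∑ i, (a i : ℚ_[p]) * y i ^ (p ^ τ * (p - 1)) = 0 ∧
      ∑ i, (b i : ℚ_[p]) * y i ^ (p ^ τ * (p - 1)) = 0 := by
  obtain ⟨x, hA0, hB0, i, j, hij⟩ := h
  set k : ℕ := p ^ τ * (p - 1) with hk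
  -- factor the rank condition
  have hfac : (a i * x i) * (b j * x j) - (a j * x j) * (b i * x i)
      = x i * x j * (a i * b j - a j * b i) := by ring
  rw [hfac] at hij
  have hxi : ¬ (p : ℤ) ∣ x i := fun hd => hij ((hd.mul_right (x j)).mul_right _)
  have hxj : ¬ (p : ℤ) ∣ x j := fun hd => hij ((hd.mul_left (x i)).mul_right _)
  have hΔ : ¬ (p : ℤ) ∣ (a i * b j - a j * b i) := fun hd => hij (hd.mul_left _)
  have hine : i ≠ j := by
    rintro rfl
    exact hij (by simp)
  -- the determinant is a unit mod p
  have hdnd : ¬ (p : ℤ) ∣ (x i ^ k * x j ^ k * (a i * b j - a j * b i)) := by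
    intro hd
    rw [← ZMod.intCast_zmod_eq_zero_iff_dvd] at hd
    push_cast at hd
    have hxi' : ((x i : ZMod p)) ≠ 0 := by
      rw [Ne, ZMod.intCast_zmod_eq_zero_iff_dvd]; exact hxi
    have hxj' : ((x j : ZMod p)) ≠ 0 := by
      rw [Ne, ZMod.intCast_zmod_eq_zero_iff_dvd]; exact hxj
    have hfermat : ∀ t : ZMod p, t ≠ 0 → t ^ k = 1 := by
      intro t ht
      rw [hk, pow_mul]
      exact ZMod.pow_card_sub_one_eq_one (pow_ne_zero _ ht)
    rw [hfermat _ hxi', hfermat _ hxj', one_mul, one_mul] at hd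
    have hd2 : ((a i * b j - a j * b i : ℤ) : ZMod p) = 0 := by push_cast; exact hd
    rw [ZMod.intCast_zmod_eq_zero_iff_dvd] at hd2
    exact hΔ hd2
  -- move to ℤ_[p]
  set d : ℤ := x i ^ k * x j ^ k * (a i * b j - a j * b i) with hd_def
  have hDunit : IsUnit ((d : ℤ_[p])) := by
    rw [PadicInt.isUnit_iff]
    refine le_antisymm (PadicInt.norm_le_one _) ?_
    by_contra hlt
    push_neg at hlt
    exact hdnd ((PadicInt.norm_int_lt_one_iff_dvd d).1 hlt)
  obtain ⟨A, hA⟩ := hA0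
  obtain ⟨B, hB⟩ := hB0
  obtain ⟨Du, hDu⟩ := hDunit
  set w : ℤ_[p] := ((Du⁻¹ : ℤ_[p]ˣ) : ℤ_[p]) with hw_def
  have hw : (d : ℤ_[p]) * w = 1 := by
    rw [hw_def, ← hDu, Units.mul_inv]
  set αc : ℤ_[p] := ((a i * x i ^ k : ℤ) : ℤ_[p]) with hαc
  set βc : ℤ_[p] := ((a j * x j ^ k : ℤ) : ℤ_[p]) with hβc
  set γc : ℤ_[p] := ((b i * x i ^ k : ℤ) : ℤ_[p]) with hγc
  set δc : ℤ_[p] := ((b j * x j ^ k : ℤ) : ℤ_[p]) with hδc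
  have hDval : αc * δc - βc * γc = (d : ℤ_[p]) := by
    rw [hαc, hβc, hγc, hδc, hd_def]
    push_cast
    ring
  set σ : ℤ_[p] := (-(A : ℤ_[p]) * δc + (B : ℤ_[p]) * βc) * w with hσ
  set θ : ℤ_[p] := (-(B : ℤ_[p]) * αc + (A : ℤ_[p]) * γc) * w with hθ
  have hlinA : αc * σ + βc * θ = -(A : ℤ_[p]) := by
    have e : αc * σ + βc * θ = -(A : ℤ_[p]) * ((αc * δc - βc * γc) * w) := by
      rw [hσ, hθ]; ring
    rw [e, hDval, hw, mul_one]
  have hlinB : γc * σ + δc * θ = -(B : ℤ_[p]) := by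
    have e : γc * σ + δc * θ = -(B : ℤ_[p]) * ((αc * δc - βc * γc) * w) := by
      rw [hσ, hθ]; ring
    rw [e, hDval, hw, mul_one]
  -- k-th roots
  obtain ⟨s1, hs1, hs1d⟩ := kth_root hp5 τ (u := 1 + (p : ℤ_[p]) ^ (τ + 1) * σ) ⟨σ, by ring⟩
  obtain ⟨s2, hs2, hs2d⟩ := kth_root hp5 τ (u := 1 + (p : ℤ_[p]) ^ (τ + 1) * θ) ⟨θ, by ring⟩
  have hs1k : s1 ^ k - 1 = (p : ℤ_[p]) ^ (τ + 1) * σ := by rw [hk, hs1]; ring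
  have hs2k : s2 ^ k - 1 = (p : ℤ_[p]) ^ (τ + 1) * θ := by rw [hk, hs2]; ring
  have hs1ne : s1 ≠ 0 := by
    intro h0
    have := norm_one_of_pdvd_sub_one hs1d
    rw [h0] at this
    simp at this
  set z : Fin s → ℤ_[p] := fun l =>
    if l = i then (x i : ℤ_[p]) * s1 else if l = j then (x j : ℤ_[p]) * s2 else (x l : ℤ_[p])
    with hz_def
  -- generic sum computation
  have hsplit : ∀ c : Fin s → ℤ, ∑ l, (c l : ℤ_[p]) * z l ^ k
      = (∑ l, (c l : ℤ_[p]) * (x l : ℤ_[p]) ^ k)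
        + (c i : ℤ_[p]) * (x i : ℤ_[p]) ^ k * (s1 ^ k - 1)
        + (c j : ℤ_[p]) * (x j : ℤ_[p]) ^ k * (s2 ^ k - 1) := by
    intro c
    have hterm : ∀ l, (c l : ℤ_[p]) * z l ^ k
        = (c l : ℤ_[p]) * (x l : ℤ_[p]) ^ k
          + ((if l = i then (c i : ℤ_[p]) * (x i : ℤ_[p]) ^ k * (s1 ^ k - 1) else 0)
            + (if l = j then (c j : ℤ_[p]) * (x j : ℤ_[p]) ^ k * (s2 ^ k - 1) else 0)) := by
      intro l
      by_cases h1 : l = i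
      · subst h1
        simp only [hz_def, eq_self_iff_true, if_true, if_neg hine, mul_pow]
        ring
      · by_cases h2 : l = j
        · subst h2
          simp only [hz_def, if_neg h1, eq_self_iff_true, if_true, mul_pow]
          ring
        · simp only [hz_def, if_neg h1, if_neg h2]
          ring
    rw [Finset.sum_congr rfl (fun l _ => hterm l)]
    rw [Finset.sum_add_distrib, Finset.sum_add_distrib]
    rw [Finset.sum_ite_eq' Finset.univ i, Finset.sum_ite_eq' Finset.univ j]
    simp only [Finset.mem_univ, if_pos]
    ring
  have hSa : ∑ l, (a l : ℤ_[p]) * (x l : ℤ_[p]) ^ k = (p : ℤ_[p]) ^ (τ + 1) * (A : ℤ_[p]) := by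
    have := congrArg (fun t : ℤ => ((t : ℤ_[p]))) hA
    push_cast at this
    convert this using 1
  have hSb : ∑ l, (b l : ℤ_[p]) * (x l : ℤ_[p]) ^ k = (p : ℤ_[p]) ^ (τ + 1) * (B : ℤ_[p]) := by
    have := congrArg (fun t : ℤ => ((t : ℤ_[p]))) hB
    push_cast at this
    convert this using 1
  have hsumA : ∑ l, (a l : ℤ_[p]) * z l ^ k = 0 := by
    rw [hsplit a, hSa, hs1k, hs2k]
    have e : (p : ℤ_[p]) ^ (τ + 1) * (A : ℤ_[p])
        + (a i : ℤ_[p]) * (x i : ℤ_[p]) ^ k * ((p : ℤ_[p]) ^ (τ + 1) * σ)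
        + (a j : ℤ_[p]) * (x j : ℤ_[p]) ^ k * ((p : ℤ_[p]) ^ (τ + 1) * θ)
        = (p : ℤ_[p]) ^ (τ + 1) * ((A : ℤ_[p]) + (αc * σ + βc * θ)) := by
      rw [hαc, hβc]
      push_cast
      ring
    rw [e, hlinA]
    ring
  have hsumB : ∑ l, (b l : ℤ_[p]) * z l ^ k = 0 := by
    rw [hsplit b, hSb, hs1k, hs2k]
    have e : (p : ℤ_[p]) ^ (τ + 1) * (B : ℤ_[p])
        + (b i : ℤ_[p]) * (x i : ℤ_[p]) ^ k * ((p : ℤ_[p]) ^ (τ + 1) * σ)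
        + (b j : ℤ_[p]) * (x j : ℤ_[p]) ^ k * ((p : ℤ_[p]) ^ (τ + 1) * θ)
        = (p : ℤ_[p]) ^ (τ + 1) * ((B : ℤ_[p]) + (γc * σ + δc * θ)) := by
      rw [hγc, hδc]
      push_cast
      ring
    rw [e, hlinB]
    ring
  -- pass to ℚ_[p]
  refine ⟨fun l => ((z l : ℚ_[p])), ?_, ?_, ?_⟩
  · intro h0
    have hzi : z i = (x i : ℤ_[p]) * s1 := by rw [hz_def]; simp
    have hxine : ((x i : ℤ_[p])) ≠ 0 := by
      rw [Int.cast_ne_zero]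
      intro hx0
      exact hxi (hx0 ▸ dvd_zero _)
    have hzine : z i ≠ 0 := by
      rw [hzi]
      exact mul_ne_zero hxine hs1ne
    have := congrFun h0 i
    simp only [Pi.zero_apply] at this
    exact hzine (PadicInt.coe_eq_zero.1 this)
  · calc ∑ l, (a l : ℚ_[p]) * ((z l : ℚ_[p])) ^ (p ^ τ * (p - 1))
        = (PadicInt.Coe.ringHom (p := p)) (∑ l, (a l : ℤ_[p]) * z l ^ k) := by
          rw [map_sum]
          refine Finset.sum_congr rfl fun l _ => ?_
          rw [map_mul, map_pow, map_intCast]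
          rfl
      _ = 0 := by rw [hsumA]; rfl
  · calc ∑ l, (b l : ℚ_[p]) * ((z l : ℚ_[p])) ^ (p ^ τ * (p - 1))
        = (PadicInt.Coe.ringHom (p := p)) (∑ l, (b l : ℤ_[p]) * z l ^ k) := by
          rw [map_sum]
          refine Finset.sum_congr rfl fun l _ => ?_
          rw [map_mul, map_pow, map_intCast]
          rfl
      _ = 0 := by rw [hsumB]; rfl
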